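/- Let ρ and σ be positive semi-definite operators with spectral decompositions ρ = Σ_k q_k |φ_k⟩⟨φ_k| and σ = Σ_j p_j |ψ_j⟩⟨ψ_j|. For every t ∈ (0,1], Σ_{j,k} q_k²/(p_j + q_k·t) · |⟨ψ_j|φ_k⟩|² = (1/t) · [ Tr[ρ] − inf_Z ( Tr[ρ (𝟙+Z†)(𝟙+Z)] + (1/t)·Tr[σ Z Z†] ) ]. -/

import Mathlib

open Matrix

lemma scalar_lb (q p t : ℝ) (hq : 0 ≤ q) (hp : 0 ≤ p) (ht : 0 < t) (c a : ℂ) :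
    q * p / (p + q * t) * Complex.normSq c ≤
      q * Complex.normSq (c + a) + p / t * Complex.normSq a := by
  obtain ⟨P, rfl⟩ : ∃ P, p = P * t := ⟨p / t, (div_mul_cancel₀ _ ht.ne').symm⟩
  have hP : 0 ≤ P := nonneg_of_mul_nonneg_right (by linarith [hp] : (0:ℝ) ≤ t * P) ht
  have hPt : P * t / t = P := mul_div_cancel_right₀ _ ht.ne'
  rw [hPt]
  rcases eq_or_lt_of_le (by positivity : (0:ℝ) ≤ P * t + q * t) with h | h
  · have hP0 : P = 0 := by nlinarith
    have hq0 : q = 0 := by nlinarith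
    simp [hP0, hq0, Complex.normSq_nonneg]
  · rw [div_mul_eq_mul_div, div_le_iff₀ h]
    simp only [Complex.normSq_apply, Complex.add_re, Complex.add_im]
    nlinarith [sq_nonneg ((P + q)*a.re + q*c.re), sq_nonneg ((P + q)*a.im + q*c.im),
      mul_pos ht ht, sq_nonneg t, ht.le]

lemma scalar_eq (q p t : ℝ) (hq : 0 ≤ q) (hp : 0 ≤ p) (ht : 0 < t) (c : ℂ) :
    q * Complex.normSq (c + (↑(-(q * t / (p + q * t))) : ℂ) * c) +
      p / t * Complex.normSq ((↑(-(q * t / (p + q * t))) : ℂ) * c) =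
      q * p / (p + q * t) * Complex.normSq c := by
  rcases eq_or_lt_of_le (by positivity : (0:ℝ) ≤ p + q * t) with h | h
  · have hp0 : p = 0 := by nlinarith
    have hq0 : q = 0 := by nlinarith
    simp [hp0, hq0]
  · have hc : c + (↑(-(q * t / (p + q * t))) : ℂ) * c = (↑(1 - q * t / (p + q * t)) : ℂ) * c := by
      push_cast; ring
    rw [hc, Complex.normSq_mul, Complex.normSq_mul, Complex.normSq_ofReal, Complex.normSq_ofReal]
    field_simp
    ring

lemma scalar_fin (q p t : ℝ) (hq : 0 ≤ q) (hp : 0 ≤ p) (ht : 0 < t) (x : ℝ) :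
    q ^ 2 / (p + q * t) * x = 1 / t * (q * x - q * p / (p + q * t) * x) := by
  rcases eq_or_lt_of_le (by positivity : (0:ℝ) ≤ p + q * t) with h | h
  · have hp0 : p = 0 := by nlinarith
    have hq0 : q = 0 := by nlinarith
    simp [hp0, hq0]
  · field_simp
    ring

/-- Let `ρ = Σ_k q_k |φ_k⟩⟨φ_k|` and `σ = Σ_j p_j |ψ_j⟩⟨ψ_j|` be positive semi-definite
operators given via spectral decompositions.  For every `t ∈ (0,1]`,
`Σ_{j,k} q_k²/(p_j + q_k t) |⟨ψ_j|φ_k⟩|²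
  = (1/t)·[ Tr[ρ] − inf_Z ( Tr[ρ (𝟙+Z†)(𝟙+Z)] + (1/t)·Tr[σ Z Z†] ) ]`. -/
theorem stmt5 {n : ℕ} (q p : Fin n → ℝ) (hq : ∀ k, 0 ≤ q k) (hp : ∀ j, 0 ≤ p j)
    (φ ψ : Fin n → (Fin n → ℂ))
    (hφ : ∀ k l, star (φ k) ⬝ᵥ φ l = if k = l then 1 else 0)
    (hψ : ∀ k l, star (ψ k) ⬝ᵥ ψ l = if k = l then 1 else 0)
    (ρ σ : Matrix (Fin n) (Fin n) ℂ)
    (hρ : ρ = ∑ k, (q k : ℂ) • vecMulVec (φ k) (star (φ k)))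
    (hσ : σ = ∑ j, (p j : ℂ) • vecMulVec (ψ j) (star (ψ j)))
    (t : ℝ) (ht : t ∈ Set.Ioc (0 : ℝ) 1) :
    ∑ j, ∑ k, q k ^ 2 / (p j + q k * t) * ‖star (ψ j) ⬝ᵥ φ k‖ ^ 2 =
      (1 / t) * ((trace ρ).re - ⨅ Z : Matrix (Fin n) (Fin n) ℂ,
        ((trace (ρ * ((1 + Zᴴ) * (1 + Z)))).re +
          (1 / t) * (trace (σ * (Z * Zᴴ))).re)) := by
  obtain ⟨ht0, _⟩ := ht
  set Φ : Matrix (Fin n) (Fin n) ℂ := Matrix.of (fun i k => φ k i) with hΦdef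
  set Ψ : Matrix (Fin n) (Fin n) ℂ := Matrix.of (fun i j => ψ j i) with hΨdef
  have hΦ1 : Φᴴ * Φ = 1 := by
    ext k l
    simpa [Matrix.mul_apply, Matrix.conjTranspose_apply, Matrix.one_apply, dotProduct,
      hΦdef] using hφ k l
  have hΦ2 : Φ * Φᴴ = 1 := mul_eq_one_comm.mp hΦ1
  have hΨ1 : Ψᴴ * Ψ = 1 := by
    ext k l
    simpa [Matrix.mul_apply, Matrix.conjTranspose_apply, Matrix.one_apply, dotProduct,
      hΨdef] using hψ k l
  have hΨ2 : Ψ * Ψᴴ = 1 := mul_eq_one_comm.mp hΨ1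
  have hdecomp : ∀ (d : Fin n → ℝ) (v : Fin n → (Fin n → ℂ)),
      (∑ k, (d k : ℂ) • vecMulVec (v k) (star (v k))) =
        Matrix.of (fun i k => v k i) * Matrix.diagonal (fun k => (d k : ℂ)) *
          (Matrix.of (fun i k => v k i))ᴴ := by
    intro d v
    ext i i'
    simp only [Matrix.sum_apply, Matrix.smul_apply, Matrix.vecMulVec_apply, Matrix.mul_apply,
      Matrix.diagonal_apply, Matrix.conjTranspose_apply, Matrix.of_apply,
      Finset.mul_sum, Finset.sum_mul]
    rw [Finset.sum_comm]
    apply Finset.sum_congr rfl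
    intro k _
    rw [Finset.sum_eq_single k]
    · simp [Pi.star_apply]; ring
    · intro b _ hb; simp [Ne.symm hb]
    · simp
  have hρ' : ρ = Φ * Matrix.diagonal (fun k => (q k : ℂ)) * Φᴴ := by rw [hρ, hdecomp q φ]
  have hσ' : σ = Ψ * Matrix.diagonal (fun j => (p j : ℂ)) * Ψᴴ := by rw [hσ, hdecomp p ψ]
  set C : Matrix (Fin n) (Fin n) ℂ := Ψᴴ * Φ with hCdef
  have hCentry : ∀ j k, C j k = star (ψ j) ⬝ᵥ φ k := by
    intro j k
    simp [hCdef, Matrix.mul_apply, Matrix.conjTranspose_apply, dotProduct, hΦdef, hΨdef,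
      mul_comm]
  have htrD : ∀ (d : Fin n → ℝ) (M : Matrix (Fin n) (Fin n) ℂ),
      trace (Matrix.diagonal (fun k => (d k : ℂ)) * M) = ∑ k, (d k : ℂ) * M k k := by
    intro d M
    simp [Matrix.trace, Matrix.diag, Matrix.diagonal_mul]
  have hGram : ∀ (M : Matrix (Fin n) (Fin n) ℂ) (k : Fin n),
      (Mᴴ * M) k k = ((∑ j, Complex.normSq (M j k) : ℝ) : ℂ) := by
    intro M k
    rw [Matrix.mul_apply]
    push_cast
    apply Finset.sum_congr rfl
    intro j _
    rw [Matrix.conjTranspose_apply, Complex.star_def]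
    exact (Complex.normSq_eq_conj_mul_self).symm
  have hGram2 : ∀ (M : Matrix (Fin n) (Fin n) ℂ) (j : Fin n),
      (M * Mᴴ) j j = ((∑ k, Complex.normSq (M j k) : ℝ) : ℂ) := by
    intro M j
    rw [Matrix.mul_apply]
    push_cast
    apply Finset.sum_congr rfl
    intro k _
    rw [Matrix.conjTranspose_apply, Complex.star_def, Complex.mul_conj]
  have htrU : ∀ (U D X : Matrix (Fin n) (Fin n) ℂ),
      trace (U * D * Uᴴ * X) = trace (D * (Uᴴ * X * U)) := by
    intro U D X
    rw [Matrix.trace_mul_cycle (U * D) Uᴴ X, Matrix.trace_mul_cycle X (U * D) Uᴴ,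
      ← Matrix.mul_assoc, Matrix.trace_mul_comm]
  -- first trace identity
  have htr1 : ∀ Z : Matrix (Fin n) (Fin n) ℂ,
      trace (ρ * ((1 + Zᴴ) * (1 + Z))) =
        ((∑ j, ∑ k, q k * Complex.normSq (C j k + (Ψᴴ * Z * Φ) j k) : ℝ) : ℂ) := by
    intro Z
    set B : Matrix (Fin n) (Fin n) ℂ := Ψᴴ * (1 + Z) * Φ with hBdef
    have hB : ∀ j k, C j k + (Ψᴴ * Z * Φ) j k = B j k := by
      intro j k
      have : C + Ψᴴ * Z * Φ = B := by rw [hCdef, hBdef]; noncomm_ring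
      rw [← this]; simp [Matrix.add_apply]
    have h1Z : (1 + Zᴴ) = (1 + Z)ᴴ := by simp
    have hmid : Bᴴ * B = Φᴴ * ((1 + Z)ᴴ * (1 + Z)) * Φ := by
      rw [hBdef]
      simp only [Matrix.conjTranspose_mul, Matrix.conjTranspose_conjTranspose,
        Matrix.mul_assoc]
      rw [← Matrix.mul_assoc Ψ Ψᴴ, hΨ2, Matrix.one_mul]
    have hcyc : trace (ρ * ((1 + Z)ᴴ * (1 + Z))) =
        trace (Matrix.diagonal (fun k => (q k : ℂ)) * (Bᴴ * B)) := by
      rw [hρ', hmid, htrU]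
    rw [h1Z, hcyc, htrD]
    simp only [hB, hGram]
    conv_rhs => rw [Finset.sum_comm]
    push_cast
    apply Finset.sum_congr rfl
    intro k _
    rw [Finset.mul_sum]
  -- second trace identity
  have htr2 : ∀ Z : Matrix (Fin n) (Fin n) ℂ,
      trace (σ * (Z * Zᴴ)) =
        ((∑ j, ∑ k, p j * Complex.normSq ((Ψᴴ * Z * Φ) j k) : ℝ) : ℂ) := by
    intro Z
    set A : Matrix (Fin n) (Fin n) ℂ := Ψᴴ * Z * Φ with hAdef
    have hmid : A * Aᴴ = Ψᴴ * (Z * Zᴴ) * Ψ := by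
      rw [hAdef]
      simp only [Matrix.conjTranspose_mul, Matrix.conjTranspose_conjTranspose,
        Matrix.mul_assoc]
      rw [← Matrix.mul_assoc Φ Φᴴ, hΦ2, Matrix.one_mul]
    have hcyc : trace (σ * (Z * Zᴴ)) =
        trace (Matrix.diagonal (fun j => (p j : ℂ)) * (A * Aᴴ)) := by
      rw [hσ', hmid, htrU]
    rw [hcyc, htrD]
    simp only [hGram2]
    push_cast
    apply Finset.sum_congr rfl
    intro j _
    rw [Finset.mul_sum]
  -- the functional in terms of A
  set g : Matrix (Fin n) (Fin n) ℂ → ℝ := fun A =>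
    ∑ j, ∑ k, (q k * Complex.normSq (C j k + A j k) + p j / t * Complex.normSq (A j k))
    with hgdef
  have hFg : ∀ Z : Matrix (Fin n) (Fin n) ℂ,
      (trace (ρ * ((1 + Zᴴ) * (1 + Z)))).re + 1 / t * (trace (σ * (Z * Zᴴ))).re
        = g (Ψᴴ * Z * Φ) := by
    intro Z
    rw [htr1 Z, htr2 Z, Complex.ofReal_re, Complex.ofReal_re, hgdef]
    simp only
    rw [Finset.mul_sum, ← Finset.sum_add_distrib]
    apply Finset.sum_congr rfl
    intro j _
    rw [Finset.mul_sum, ← Finset.sum_add_distrib]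
    apply Finset.sum_congr rfl
    intro k _
    ring
  set V : ℝ := ∑ j, ∑ k, q k * p j / (p j + q k * t) * Complex.normSq (C j k) with hVdef
  have hgV : ∀ A, V ≤ g A := by
    intro A
    apply Finset.sum_le_sum
    intro j _
    apply Finset.sum_le_sum
    intro k _
    exact scalar_lb (q k) (p j) t (hq k) (hp j) ht0 (C j k) (A j k)
  set A₀ : Matrix (Fin n) (Fin n) ℂ :=
    Matrix.of (fun j k => (↑(-(q k * t / (p j + q k * t))) : ℂ) * C j k) with hA₀def
  have hA₀ : g A₀ = V := by
    rw [hgdef, hVdef]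
    apply Finset.sum_congr rfl
    intro j _
    apply Finset.sum_congr rfl
    intro k _
    exact scalar_eq (q k) (p j) t (hq k) (hp j) ht0 (C j k)
  have hZ₀ : Ψᴴ * (Ψ * A₀ * Φᴴ) * Φ = A₀ := by
    calc Ψᴴ * (Ψ * A₀ * Φᴴ) * Φ = Ψᴴ * Ψ * A₀ * (Φᴴ * Φ) := by
          simp only [Matrix.mul_assoc]
      _ = A₀ := by rw [hΨ1, hΦ1, Matrix.one_mul, Matrix.mul_one]
  have hinf : (⨅ Z : Matrix (Fin n) (Fin n) ℂ,
      ((trace (ρ * ((1 + Zᴴ) * (1 + Z)))).re + 1 / t * (trace (σ * (Z * Zᴴ))).re)) = V := by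
    refine le_antisymm ?_ (le_ciInf fun Z => by rw [hFg Z]; exact hgV _)
    have hbdd : BddBelow (Set.range fun Z : Matrix (Fin n) (Fin n) ℂ =>
        ((trace (ρ * ((1 + Zᴴ) * (1 + Z)))).re + 1 / t * (trace (σ * (Z * Zᴴ))).re)) := by
      refine ⟨V, ?_⟩
      rintro x ⟨Z, rfl⟩
      dsimp only
      rw [hFg Z]
      exact hgV _
    refine (ciInf_le hbdd (Ψ * A₀ * Φᴴ)).trans_eq ?_
    rw [hFg, hZ₀, hA₀]
  rw [hinf]
  -- trace of ρ
  have htrρ : (trace ρ).re = ∑ k, q k := by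
    have h1 : trace ρ = ((∑ k, q k : ℝ) : ℂ) := by
      rw [hρ', Matrix.trace_mul_comm, ← Matrix.mul_assoc, hΦ1, Matrix.one_mul,
        Matrix.trace_diagonal]
      push_cast
      rfl
    rw [h1, Complex.ofReal_re]
  rw [htrρ]
  -- columns of C are normalized
  have hCnorm : ∀ k, ∑ j, Complex.normSq (C j k) = 1 := by
    have hC1 : Cᴴ * C = 1 := by
      rw [hCdef, Matrix.conjTranspose_mul, Matrix.conjTranspose_conjTranspose,
        Matrix.mul_assoc, ← Matrix.mul_assoc Ψ Ψᴴ, hΨ2, Matrix.one_mul, hΦ1]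
    intro k
    have h2 := congrArg (fun M : Matrix (Fin n) (Fin n) ℂ => M k k) hC1
    simp only [hGram, Matrix.one_apply_eq] at h2
    exact_mod_cast h2
  have hsum1 : ∑ k, q k = ∑ j, ∑ k, q k * Complex.normSq (C j k) := by
    rw [Finset.sum_comm]
    apply Finset.sum_congr rfl
    intro k _
    rw [← Finset.mul_sum, hCnorm k, mul_one]
  rw [hsum1, hVdef, ← Finset.sum_sub_distrib, Finset.mul_sum]
  apply Finset.sum_congr rfl
  intro j _
  rw [← Finset.sum_sub_distrib, Finset.mul_sum]
  apply Finset.sum_congr rfl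
  intro k _
  rw [← hCentry j k, Complex.sq_norm]
  exact scalar_fin (q k) (p j) t (hq k) (hp j) ht0 (Complex.normSq (C j k))
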